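/- Let A be a closed densely defined linear operator on a complex Banach space X such that X = ker A ⊕ range A (direct sum of closed subspaces) and let P be the projection onto ker A along range A. Then A + P, with domain D(A), is bijective from D(A) onto X and has a bounded inverse. -/

import Mathlib

theorem reducibly_invertible_of_ker_range_compl
    {X : Type*} [NormedAddCommGroup X] [NormedSpace ℂ X] [CompleteSpace X]
    (A : X →ₗ.[ℂ] X)
    (hclosed : A.IsClosed)
    (hdense : Dense (A.domain : Set X))
    (hkercl : IsClosed (((LinearMap.ker A.toFun).map A.domain.subtype : Submodule ℂ X) : Set X))
    (hrancl : IsClosed ((LinearMap.range A.toFun : Submodule ℂ X) : Set X))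
    (hcompl : IsCompl ((LinearMap.ker A.toFun).map A.domain.subtype)
      (LinearMap.range A.toFun))
    (P : X →L[ℂ] X)
    (hPran : LinearMap.range (P : X →ₗ[ℂ] X) = (LinearMap.ker A.toFun).map A.domain.subtype)
    (hPker : LinearMap.ker (P : X →ₗ[ℂ] X) = LinearMap.range A.toFun)
    (hPproj : P * P = P) :
    Function.Bijective (fun x : A.domain => A x + P x) ∧
    ∃ C > (0 : ℝ), ∀ x : A.domain, ‖(x : X)‖ ≤ C * ‖A x + P x‖ := by
  set N := ((LinearMap.ker A.toFun).map A.domain.subtype : Submodule ℂ X) with hN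
  -- P is idempotent
  have hPidem : ∀ y : X, P (P y) = P y := by
    intro y
    have := DFunLike.congr_fun hPproj y
    simpa [ContinuousLinearMap.mul_apply] using this
  -- P fixes N
  have hPfix : ∀ y ∈ N, P y = y := by
    intro y hy
    rw [← hPran] at hy
    obtain ⟨m, rfl⟩ := hy
    exact hPidem m
  -- key injectivity lemma
  have hinj0 : ∀ x : A.domain, A x + P (x : X) = 0 → x = 0 := by
    intro x hx
    have hAx : A x ∈ LinearMap.range A.toFun := ⟨x, rfl⟩
    have hPx : P (x : X) ∈ N := by rw [← hPran]; exact ⟨x, rfl⟩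
    have hAxN : A x ∈ N := by
      have h : A x = -(P (x : X)) := eq_neg_of_add_eq_zero_left hx
      rw [h]; exact N.neg_mem hPx
    have hA0 : A x = 0 := (hcompl.disjoint.eq_bot ▸ Submodule.mem_inf.mpr ⟨hAxN, hAx⟩ :
      A x ∈ (⊥ : Submodule ℂ X))
    have hxN : (x : X) ∈ N := ⟨x, hA0, rfl⟩
    have := hPfix _ hxN
    have hx0 : (x : X) = 0 := by
      have h0 : P (x : X) = 0 := by rw [hA0, zero_add] at hx; exact hx
      rw [← this, h0]
    exact Subtype.ext hx0
  -- surjectivity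
  have hsurj : ∀ y : X, ∃ x : A.domain, A x + P (x : X) = y := by
    intro y
    have hyP : y - P y ∈ LinearMap.range A.toFun := by
      rw [← hPker]
      simp [LinearMap.mem_ker, map_sub, hPidem]
    obtain ⟨z, hz⟩ := hyP
    have hPz : P (z : X) ∈ N := by rw [← hPran]; exact ⟨z, rfl⟩
    obtain ⟨u, hu_ker, hu⟩ := Submodule.mem_map.mp hPz
    have hPy : P y ∈ N := by rw [← hPran]; exact ⟨y, rfl⟩
    obtain ⟨w, hw_ker, hw⟩ := Submodule.mem_map.mp hPy
    refine ⟨z - u + w, ?_⟩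
    have hA : A (z - u + w) = A z - A u + A w := by
      rw [A.map_add, A.map_sub]
    have hAu : A u = 0 := hu_ker
    have hAw : A w = 0 := hw_ker
    have hcoe : ((z - u + w : A.domain) : X) = (z : X) - u + w := rfl
    have hP : P ((z - u + w : A.domain) : X) = P y := by
      rw [hcoe, map_add, map_sub]
      have h1 : P ((u : X)) = P (z : X) := by
        rw [show ((u : X)) = P (z : X) from hu, hPidem]
      have h2 : P ((w : X)) = P y := by
        rw [show ((w : X)) = P y from hw, hPidem]
      rw [h1, h2]; abel
    have hz' : A z = y - P y := hz
    have hAv : A (z - u + w) = y - P y := by rw [hA, hAu, hAw, hz']; abel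
    rw [hAv, hP]; abel
  have hinj : Function.Injective (fun x : A.domain => A x + P (x : X)) := by
    intro x₁ x₂ h
    have hsub : A (x₁ - x₂) + P ((x₁ - x₂ : A.domain) : X) = 0 := by
      have hc : ((x₁ - x₂ : A.domain) : X) = (x₁ : X) - x₂ := rfl
      rw [A.map_sub, hc, map_sub]
      have h' : A x₁ + P (x₁ : X) = A x₂ + P (x₂ : X) := h
      rw [show A x₁ = A x₂ + P (x₂:X) - P (x₁:X) by rw [← h']; abel]
      abel
    have := hinj0 _ hsub
    exact sub_eq_zero.mp (by exact_mod_cast this)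
  -- the norm bound via the graph
  haveI : CompleteSpace A.graph := IsClosed.completeSpace_coe (hs := hclosed)
  set T : A.graph →L[ℂ] X :=
    (ContinuousLinearMap.snd ℂ X X + P.comp (ContinuousLinearMap.fst ℂ X X)).comp
      A.graph.subtypeL with hT
  have hTapply : ∀ x : A.domain, T ⟨((x : X), A x), A.mem_graph x⟩ = A x + P (x : X) := by
    intro x
    simp [hT, add_comm]
  have hTinj : LinearMap.ker (T : A.graph →ₗ[ℂ] X) = ⊥ := by
    rw [LinearMap.ker_eq_bot']
    rintro ⟨g, hg⟩ hTg
    obtain ⟨x, hx1, hx2⟩ := A.mem_graph_iff.mp hg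
    have hgx : (⟨g, hg⟩ : A.graph) = ⟨((x : X), A x), A.mem_graph x⟩ := by
      apply Subtype.ext
      exact Prod.ext hx1.symm hx2.symm
    rw [ContinuousLinearMap.coe_coe, hgx, hTapply] at hTg
    have := hinj0 x hTg
    rw [hgx, this]
    simp
  have hTsurj : LinearMap.range (T : A.graph →ₗ[ℂ] X) = ⊤ := by
    rw [LinearMap.range_eq_top]
    intro y
    obtain ⟨x, hx⟩ := hsurj y
    exact ⟨⟨((x : X), A x), A.mem_graph x⟩, by rw [ContinuousLinearMap.coe_coe, hTapply]; exact hx⟩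
  set e := ContinuousLinearEquiv.ofBijective T hTinj hTsurj with he
  set C : ℝ := ‖(e.symm : X →L[ℂ] A.graph)‖ + 1 with hC
  refine ⟨⟨hinj, fun y => (hsurj y).imp fun x hx => hx⟩, C, by positivity, ?_⟩
  intro x
  set g : A.graph := ⟨((x : X), A x), A.mem_graph x⟩ with hg
  have h1 : ‖(x : X)‖ ≤ ‖g‖ := by
    have h := norm_fst_le (((x : X), A x) : X × X)
    exact h
  have h2 : g = e.symm (e g) := (e.symm_apply_apply g).symm
  have h3 : e g = A x + P (x : X) := by
    rw [show e g = T g from rfl, hg, hTapply]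
  calc ‖(x : X)‖ ≤ ‖g‖ := h1
    _ = ‖e.symm (e g)‖ := by rw [← h2]
    _ ≤ ‖(e.symm : X →L[ℂ] A.graph)‖ * ‖e g‖ := (e.symm : X →L[ℂ] A.graph).le_opNorm _
    _ ≤ C * ‖e g‖ := by
        apply mul_le_mul_of_nonneg_right _ (norm_nonneg _)
        simp [hC]
    _ = C * ‖A x + P (x : X)‖ := by rw [h3]
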